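/- On the Berger sphere (S³, g^h) with its canonical Spin^c structure twisted by the trivial line bundle with connection α = (1−h²)ξ, the spinor ψ^h ⊗ σ is an eigenspinor of the Spin^c Dirac operator with eigenvalue h²/2 − 2, and its Energy–Momentum tensor has eigenvalues −h²/2 (double) and 3h²/2 − 2 (in direction ξ); hence |ℓ^{ψ^h⊗σ}|² = 2(h²/2)² + (3h²/2 − 2)². -/

import Mathlib

/-- The energy–momentum tensor `T^φ(eᵢ,eⱼ) = ½ Re⟨eᵢ·∇_{eⱼ}φ + eⱼ·∇_{eᵢ}φ, φ/|φ|²⟩` in an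
orthonormal frame `e`, where `d i x = ∇_{eᵢ}φ (x)`. -/
noncomputable def emTensor {M V H : Type*} [NormedAddCommGroup V] [InnerProductSpace ℝ V]
    [NormedAddCommGroup H] [InnerProductSpace ℂ H]
    (cl : V →ₗ[ℝ] H →ₗ[ℂ] H) (e : OrthonormalBasis (Fin 3) ℝ V)
    (φ : M → H) (d : Fin 3 → M → H) (i j : Fin 3) (x : M) : ℝ :=
  (1 / 2) * ((inner ℂ (φ x) (cl (e i) (d j x) + cl (e j) (d i x)) : ℂ).re) / ‖φ x‖ ^ 2

/-- On the Berger sphere `(S³, g^h)` with its Spin^c structure twisted by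
the trivial line bundle with connection `α = (1−h²)ξ`, the spinor `φ = ψ^h ⊗ σ` (of unit
norm), whose covariant derivatives in the `g^h`-orthonormal frame `{ξ, he₁, he₂}` are
`∇_ξ φ = (−3h²/2 + 2) ξ·φ` and `∇_{heₐ} φ = (h²/2) heₐ·φ` (a = 1,2), is an eigenspinor of
the Spin^c Dirac operator `Dφ = ∑ᵢ eᵢ·∇_{eᵢ}φ` with eigenvalue `h²/2 − 2`; its
energy–momentum tensor is diagonal with eigenvalues `−h²/2` (double) and `3h²/2 − 2` (in
the direction `ξ`), and hence `|ℓ^φ|² = 2(h²/2)² + (3h²/2 − 2)²`. -/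
theorem stmt_15 {M V H : Type*} [NormedAddCommGroup V] [InnerProductSpace ℝ V]
    [NormedAddCommGroup H] [InnerProductSpace ℂ H]
    (cl : V →ₗ[ℝ] H →ₗ[ℂ] H)
    (hclifford : ∀ (v w : V) (ξ : H),
      cl v (cl w ξ) + cl w (cl v ξ) = -(((2 * (inner ℝ v w : ℝ)) : ℂ)) • ξ)
    (hskew : ∀ (v : V) (ξ₁ ξ₂ : H), (inner ℂ (cl v ξ₁) ξ₂ : ℂ) = - inner ℂ ξ₁ (cl v ξ₂))
    (e : OrthonormalBasis (Fin 3) ℝ V)  -- the frame {ξ, he₁, he₂}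
    (h : ℝ) (hh : 1 < h)
    (φ : M → H) (hφ : ∀ x, ‖φ x‖ = 1)
    (d : Fin 3 → M → H)  -- d i x = ∇_{eᵢ}φ (x)
    (hd0 : ∀ x, d 0 x = (((-3 * h ^ 2 / 2 + 2 : ℝ)) : ℂ) • cl (e 0) (φ x))
    (hd1 : ∀ x, d 1 x = (((h ^ 2 / 2 : ℝ)) : ℂ) • cl (e 1) (φ x))
    (hd2 : ∀ x, d 2 x = (((h ^ 2 / 2 : ℝ)) : ℂ) • cl (e 2) (φ x)) :
    -- φ is an eigenspinor of D with eigenvalue h²/2 − 2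
    (∀ x, ∑ i, cl (e i) (d i x) = (((h ^ 2 / 2 - 2 : ℝ)) : ℂ) • φ x)
    -- the energy–momentum tensor is diagonal, with eigenvalues −h²/2, −h²/2, 3h²/2 − 2
    ∧ (∀ x, emTensor cl e φ d 1 1 x = -(h ^ 2 / 2)
        ∧ emTensor cl e φ d 2 2 x = -(h ^ 2 / 2)
        ∧ emTensor cl e φ d 0 0 x = 3 * h ^ 2 / 2 - 2
        ∧ ∀ i j, i ≠ j → emTensor cl e φ d i j x = 0)
    -- |ℓ^φ|² = 2(h²/2)² + (3h²/2 − 2)²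
    ∧ (∀ x, ∑ i, ∑ j, (emTensor cl e φ d i j x) ^ 2 =
        2 * (h ^ 2 / 2) ^ 2 + (3 * h ^ 2 / 2 - 2) ^ 2) := by

  -- Squares of frame Clifford multiplications
  have e_unit : ∀ i, (inner ℝ (e i) (e i) : ℝ) = 1 := by
    intro i
    rw [real_inner_self_eq_norm_sq, e.orthonormal.1 i]
    norm_num
  have e_orth : ∀ i j, i ≠ j → (inner ℝ (e i) (e j) : ℝ) = 0 := fun i j hij =>
    e.orthonormal.2 hij
  have sqcl : ∀ (i : Fin 3) (ξ : H), cl (e i) (cl (e i) ξ) = -ξ := by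
    intro i ξ
    have h1 := hclifford (e i) (e i) ξ
    rw [e_unit i] at h1
    have h2 : (2 : ℂ) • cl (e i) (cl (e i) ξ) = (2 : ℂ) • (-ξ) := by
      rw [two_smul, h1]
      push_cast
      module
    exact smul_right_injective H (by norm_num : (2:ℂ) ≠ 0) h2
  have imz : ∀ i j, i ≠ j → ∀ x,
      ((inner ℂ (φ x) (cl (e i) (cl (e j) (φ x))) : ℂ)).re = 0 := by
    intro i j hij x
    set z : ℂ := inner ℂ (φ x) (cl (e i) (cl (e j) (φ x))) with hz
    have anti : cl (e j) (cl (e i) (φ x)) = - cl (e i) (cl (e j) (φ x)) := by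
      have h1 := hclifford (e i) (e j) (φ x)
      rw [e_orth i j hij] at h1
      have h2 : cl (e i) (cl (e j) (φ x)) + cl (e j) (cl (e i) (φ x)) = 0 := by
        rw [h1]; push_cast; module
      exact eq_neg_of_add_eq_zero_right h2
    have hc : (starRingEnd ℂ) z = -z := by
      have c1 : (starRingEnd ℂ) z = inner ℂ (cl (e i) (cl (e j) (φ x))) (φ x) := by
        rw [hz, inner_conj_symm]
      have c2 : (inner ℂ (cl (e i) (cl (e j) (φ x))) (φ x) : ℂ)
          = - inner ℂ (cl (e j) (φ x)) (cl (e i) (φ x)) := hskew _ _ _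
      have c3 : (inner ℂ (cl (e j) (φ x)) (cl (e i) (φ x)) : ℂ)
          = - inner ℂ (φ x) (cl (e j) (cl (e i) (φ x))) := hskew _ _ _
      have c4 : (inner ℂ (φ x) (cl (e j) (cl (e i) (φ x))) : ℂ) = -z := by
        rw [hz, anti, inner_neg_right]
      rw [c1, c2, c3, c4]; ring
    have h1 := Complex.add_conj z
    rw [hc] at h1
    have h2 : ((2 * z.re : ℝ) : ℂ) = 0 := by rw [← h1]; ring
    have h3 : (2 : ℝ) * z.re = 0 := by exact_mod_cast h2
    linarith
  have innφ : ∀ x, (inner ℂ (φ x) (φ x) : ℂ) = 1 := by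
    intro x
    rw [inner_self_eq_norm_sq_to_K, hφ x]
    norm_num
  have diag : ∀ (i : Fin 3) (c : ℝ), (∀ x, d i x = ((c : ℝ) : ℂ) • cl (e i) (φ x)) →
      ∀ x, emTensor cl e φ d i i x = -c := by
    intro i c hc x
    unfold emTensor
    rw [hc x, hφ x, map_smul, sqcl i (φ x)]
    rw [inner_add_right, inner_smul_right, inner_neg_right, innφ x]
    simp [Complex.add_re, Complex.mul_re]
    ring
  have c : Fin 3 → ℝ := ![-3 * h ^ 2 / 2 + 2, h ^ 2 / 2, h ^ 2 / 2]
  have hdall : ∀ (i : Fin 3) x, ∃ ci : ℝ, d i x = ((ci : ℝ) : ℂ) • cl (e i) (φ x) := by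
    intro i x
    fin_cases i
    · exact ⟨_, hd0 x⟩
    · exact ⟨_, hd1 x⟩
    · exact ⟨_, hd2 x⟩
  have offd : ∀ i j, i ≠ j → ∀ x, emTensor cl e φ d i j x = 0 := by
    intro i j hij x
    obtain ⟨ci, hci⟩ := hdall i x
    obtain ⟨cj, hcj⟩ := hdall j x
    unfold emTensor
    rw [hci, hcj, hφ x, map_smul, map_smul,
        inner_add_right, inner_smul_right, inner_smul_right]
    simp [Complex.add_re, Complex.mul_re, imz i j hij x, imz j i hij.symm x]
  refine ⟨?_, ?_, ?_⟩
  · intro x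
    rw [Fin.sum_univ_three, hd0 x, hd1 x, hd2 x, map_smul, map_smul, map_smul,
        sqcl 0, sqcl 1, sqcl 2]
    push_cast
    module
  · intro x
    refine ⟨diag 1 _ hd1 x, diag 2 _ hd2 x, (diag 0 _ hd0 x).trans (by ring), fun i j hij => offd i j hij x⟩
  · intro x
    have t11 := diag 1 _ hd1 x
    have t22 := diag 2 _ hd2 x
    have t00 := diag 0 _ hd0 x
    rw [Fin.sum_univ_three, Fin.sum_univ_three, Fin.sum_univ_three, Fin.sum_univ_three,
        t00, t11, t22,
        offd 0 1 (by decide) x, offd 0 2 (by decide) x, offd 1 0 (by decide) x,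
        offd 1 2 (by decide) x, offd 2 0 (by decide) x, offd 2 1 (by decide) x]
    ring
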